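/- Let G be a graph on n vertices with minimum degree δ. Then the spectral radius ρ(G) of its adjacency matrix satisfies ρ(G) ≤ (δ-1)/2 + sqrt(2e(G) - δn + (δ+1)²/4), where e(G) is the number of edges of G. -/

import Mathlib

open SimpleGraph Finset
open scoped Classical
open Matrix

lemma adjMatrix_isHermitian {V : Type*} [Fintype V] (G : SimpleGraph V)
    [DecidableRel G.Adj] : (G.adjMatrix ℝ).IsHermitian := by
  ext i j
  simp [Matrix.conjTranspose_apply, SimpleGraph.adjMatrix_apply, SimpleGraph.adj_comm]

/-- The spectral radius of a graph: the largest eigenvalue of its adjacency matrix. -/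
noncomputable def specRad {n : ℕ} (G : SimpleGraph (Fin n)) : ℝ := by
  classical
  exact ⨆ i, (adjMatrix_isHermitian G).eigenvalues i

lemma specRad_eq_iSup {n : ℕ} (G : SimpleGraph (Fin n)) [inst : DecidableRel G.Adj] :
    specRad G = ⨆ i, (adjMatrix_isHermitian G).eigenvalues i := by
  have key : ∀ i1 i2 : DecidableRel G.Adj,
      (⨆ i, (@adjMatrix_isHermitian (Fin n) _ G i1).eigenvalues i)
        = ⨆ i, (@adjMatrix_isHermitian (Fin n) _ G i2).eigenvalues i := by
    intro i1 i2
    have h : i1 = i2 := funext fun a => funext fun b => Subsingleton.elim _ _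
    subst h
    rfl
  unfold specRad
  exact key _ _

open Finset Matrix

lemma perron_aux {n : ℕ} (hn : 0 < n) {A : Matrix (Fin n) (Fin n) ℝ}
    (hA : A.IsHermitian) (hnn : ∀ i j, 0 ≤ A i j) :
    ∃ x : Fin n → ℝ,
      (∀ v, 0 ≤ x v) ∧ x ⬝ᵥ x = 1 ∧
      A *ᵥ x = (⨆ i, hA.eigenvalues i) • x ∧
      ∀ z : Fin n → ℝ, z ⬝ᵥ (A *ᵥ z) ≤ (⨆ i, hA.eigenvalues i) * (z ⬝ᵥ z) := by
  have hne : Nonempty (Fin n) := ⟨⟨0, hn⟩⟩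
  set μ := ⨆ i, hA.eigenvalues i with hμdef
  set U : Matrix (Fin n) (Fin n) ℝ := (hA.eigenvectorUnitary : Matrix (Fin n) (Fin n) ℝ) with hUdef
  have hU1 : U * star U = 1 := Matrix.mem_unitaryGroup_iff.mp (hA.eigenvectorUnitary).2
  have hU2 : star U * U = 1 := Matrix.mem_unitaryGroup_iff'.mp (hA.eigenvectorUnitary).2
  have hsU : star U = Uᵀ := by
    ext i j
    simp [Matrix.star_apply]
  have hAeq : A = U * Matrix.diagonal hA.eigenvalues * star U := by
    have h := hA.spectral_theorem
    have h2 : (RCLike.ofReal ∘ hA.eigenvalues : Fin n → ℝ) = hA.eigenvalues := by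
      funext i; rfl
    rw [h2] at h
    exact h
  have hid : ∀ z : Fin n → ℝ, U *ᵥ (star U *ᵥ z) = z := by
    intro z
    rw [Matrix.mulVec_mulVec, hU1, Matrix.one_mulVec]
  have hAz : ∀ z : Fin n → ℝ,
      A *ᵥ z = U *ᵥ (Matrix.diagonal hA.eigenvalues *ᵥ (star U *ᵥ z)) := by
    intro z
    rw [Matrix.mulVec_mulVec, Matrix.mulVec_mulVec, ← hAeq]
  have hdotU : ∀ z w : Fin n → ℝ, z ⬝ᵥ (U *ᵥ w) = (star U *ᵥ z) ⬝ᵥ w := by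
    intro z w
    rw [Matrix.dotProduct_mulVec, hsU, ← Matrix.vecMul_transpose, Matrix.transpose_transpose]
  have quad : ∀ z : Fin n → ℝ,
      z ⬝ᵥ (A *ᵥ z) = ∑ i, hA.eigenvalues i * ((star U *ᵥ z) i)^2 := by
    intro z
    rw [hAz, hdotU]
    unfold dotProduct
    refine Finset.sum_congr rfl fun i _ => ?_
    rw [Matrix.mulVec_diagonal]
    ring
  have norm : ∀ z : Fin n → ℝ, z ⬝ᵥ z = ∑ i, ((star U *ᵥ z) i)^2 := by
    intro z
    conv_lhs => rw [← hid z, hdotU]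
    rw [Matrix.mulVec_mulVec, hU2, Matrix.one_mulVec]
    unfold dotProduct
    exact Finset.sum_congr rfl fun i _ => (sq _).symm
  have hble : ∀ i, hA.eigenvalues i ≤ μ :=
    fun i => le_ciSup (Set.Finite.bddAbove (Set.finite_range _)) i
  have hray : ∀ z : Fin n → ℝ, z ⬝ᵥ (A *ᵥ z) ≤ μ * (z ⬝ᵥ z) := by
    intro z
    rw [quad, norm, Finset.mul_sum]
    refine Finset.sum_le_sum fun i _ => ?_
    nlinarith [hble i, sq_nonneg ((star U *ᵥ z) i)]
  obtain ⟨i₀, -, hmax⟩ := Finset.exists_max_image univ hA.eigenvalues univ_nonempty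
  have hμi : μ = hA.eigenvalues i₀ :=
    le_antisymm (ciSup_le fun i => hmax i (mem_univ i))
      (le_ciSup (Set.Finite.bddAbove (Set.finite_range _)) i₀)
  set y : Fin n → ℝ := ⇑(hA.eigenvectorBasis i₀) with hydef
  have hAy : A *ᵥ y = μ • y := by
    rw [hμi]; exact hA.mulVec_eigenvectorBasis i₀
  have hyU : star U *ᵥ y = Pi.single i₀ 1 := hA.star_eigenvectorUnitary_mulVec i₀
  have hyy : y ⬝ᵥ y = 1 := by
    rw [norm, hyU]
    rw [Finset.sum_eq_single i₀]
    · simp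
    · intro b _ hb; simp [Pi.single_apply, hb]
    · simp
  refine ⟨fun v => |y v|, fun v => abs_nonneg _, ?_, ?_, hray⟩
  · unfold dotProduct
    rw [← hyy]
    exact Finset.sum_congr rfl fun i _ => abs_mul_abs_self _
  · -- A *ᵥ |y| = μ • |y|
    set x : Fin n → ℝ := fun v => |y v| with hxdef
    have hxx : x ⬝ᵥ x = 1 := by
      unfold dotProduct
      rw [← hyy]
      exact Finset.sum_congr rfl fun i _ => abs_mul_abs_self _
    have hyAy : y ⬝ᵥ (A *ᵥ y) = μ := by
      rw [hAy, dotProduct_smul, hyy]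
      simp
    have hxq : x ⬝ᵥ (A *ᵥ x) = μ := by
      refine le_antisymm (by simpa [hxx] using hray x) ?_
      rw [← hyAy]
      unfold dotProduct Matrix.mulVec
      refine Finset.sum_le_sum fun i _ => ?_
      unfold dotProduct
      rw [Finset.mul_sum, Finset.mul_sum]
      refine Finset.sum_le_sum fun j _ => ?_
      calc y i * (A i j * y j) ≤ |y i * (A i j * y j)| := le_abs_self _
        _ = |y i| * (A i j * |y j|) := by
            rw [abs_mul, abs_mul, abs_of_nonneg (hnn i j)]
    set c : Fin n → ℝ := star U *ᵥ x with hcdef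
    have h1 : ∑ i, hA.eigenvalues i * (c i)^2 = μ := by rw [← quad x]; exact hxq
    have h2 : ∑ i, (c i)^2 = 1 := by rw [← norm x]; exact hxx
    have h3 : ∑ i, (μ - hA.eigenvalues i) * (c i)^2 = 0 := by
      have : ∑ i, (μ - hA.eigenvalues i) * (c i)^2
          = μ * ∑ i, (c i)^2 - ∑ i, hA.eigenvalues i * (c i)^2 := by
        rw [Finset.mul_sum, ← Finset.sum_sub_distrib]
        exact Finset.sum_congr rfl fun i _ => by ring
      rw [this, h1, h2, mul_one, sub_self]
    have h4 : ∀ i, hA.eigenvalues i * c i = μ * c i := by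
      intro i
      have hterm := (Finset.sum_eq_zero_iff_of_nonneg (fun i _ =>
        mul_nonneg (by linarith [hble i]) (sq_nonneg (c i)))).mp h3 i (mem_univ i)
      rcases mul_eq_zero.mp hterm with h | h
      · rw [show hA.eigenvalues i = μ by linarith]
      · rw [pow_eq_zero_iff (by norm_num)] at h
        rw [h, mul_zero, mul_zero]
    have hdc : Matrix.diagonal hA.eigenvalues *ᵥ c = μ • c := by
      funext i
      rw [Matrix.mulVec_diagonal, Pi.smul_apply, smul_eq_mul]
      exact h4 i
    calc A *ᵥ x = U *ᵥ (Matrix.diagonal hA.eigenvalues *ᵥ c) := hAz x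
      _ = U *ᵥ (μ • c) := by rw [hdc]
      _ = μ • (U *ᵥ c) := Matrix.mulVec_smul _ _ _
      _ = μ • x := by rw [hcdef, hid]

open SimpleGraph Finset Matrix

section
variable {n : ℕ} (G : SimpleGraph (Fin n)) [DecidableRel G.Adj]

-- generic double-sum swap
lemma swap_sum (S T : Finset (Fin n)) (f : Fin n → ℝ) :
    ∑ v ∈ S, ∑ w ∈ T.filter (fun t => G.Adj v t), f w
      = ∑ w ∈ T, ((S.filter (fun v => G.Adj w v)).card : ℝ) * f w := by
  simp_rw [Finset.sum_filter]
  rw [Finset.sum_comm]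
  refine Finset.sum_congr rfl fun w _ => ?_
  have h1 : ∀ v ∈ S, (if G.Adj v w then f w else 0) = (if G.Adj w v then f w else 0) := by
    intro v _
    exact if_congr (G.adj_comm v w) rfl rfl
  rw [Finset.sum_congr rfl h1, ← Finset.sum_filter, Finset.sum_const, nsmul_eq_mul]

end

theorem key_ineq {n : ℕ} (G : SimpleGraph (Fin n)) [DecidableRel G.Adj]
    (μ : ℝ) (x : Fin n → ℝ) (hx0 : ∀ v, 0 ≤ x v)
    (heig' : ∀ v, ∑ w ∈ G.neighborFinset v, x w = μ * x v)
    (u : Fin n) (humax : ∀ v, x v ≤ x u) (hxu : 0 < x u)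
    (hμδ : (G.minDegree : ℝ) ≤ μ)
    (hδd : ∀ v, (G.minDegree : ℝ) ≤ (G.degree v : ℝ)) :
    μ^2 ≤ ((G.minDegree:ℝ) - 1) * μ
      + (2*(G.edgeFinset.card:ℝ) - (G.minDegree:ℝ)*n + (G.minDegree:ℝ)) := by
  set δ : ℝ := (G.minDegree : ℝ) with hδ
  set M := G.neighborFinset u with hM
  set R := univ \ insert u M with hR
  have huM : u ∉ M := by
    rw [hM, SimpleGraph.mem_neighborFinset]
    exact G.irrefl
  have hMsub : insert u M ⊆ univ := subset_univ _
  have hdisjMR : Disjoint M R := by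
    have h : Disjoint (insert u M) R := by rw [hR]; exact Finset.disjoint_sdiff
    exact h.mono_left (Finset.subset_insert u M)
  have huR : u ∉ R := by
    rw [hR, Finset.mem_sdiff]
    simp
  have hwR : ∀ w ∈ R, ¬ G.Adj u w := by
    intro w hw hadj
    rw [hR, Finset.mem_sdiff, Finset.mem_insert] at hw
    exact hw.2 (Or.inr (by rw [hM, SimpleGraph.mem_neighborFinset]; exact hadj))
  have hfdisj : ∀ w : Fin n, Disjoint (M.filter fun v => G.Adj w v) (R.filter fun v => G.Adj w v) :=
    fun w => Finset.disjoint_filter_filter hdisjMR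
  have hsplitN : ∀ w ∈ R,
      (M.filter fun v => G.Adj w v) ∪ (R.filter fun v => G.Adj w v) = G.neighborFinset w := by
    intro w hw
    ext v
    simp only [Finset.mem_union, Finset.mem_filter, SimpleGraph.mem_neighborFinset]
    constructor
    · rintro (⟨_, h⟩ | ⟨_, h⟩) <;> exact h
    · intro hadj
      by_cases hv : v ∈ M
      · exact Or.inl ⟨hv, hadj⟩
      · refine Or.inr ⟨?_, hadj⟩
        rw [hR, Finset.mem_sdiff, Finset.mem_insert]
        refine ⟨Finset.mem_univ v, ?_⟩
        rintro (rfl | hvM)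
        · exact hwR w hw (G.adj_symm hadj)
        · exact hv hvM
  have f_R : ∀ w ∈ R, ((M.filter fun v => G.Adj w v).card : ℝ)
      + ((R.filter fun v => G.Adj w v).card : ℝ) = (G.degree w : ℝ) := by
    intro w hw
    have h := Finset.card_union_of_disjoint (hfdisj w)
    rw [hsplitN w hw] at h
    have h2 : G.degree w = (M.filter fun v => G.Adj w v).card
        + (R.filter fun v => G.Adj w v).card := h
    rw [h2]
    push_cast
    ring
  have f_M : ∀ w ∈ M, ((M.filter fun v => G.Adj w v).card : ℝ)
      + ((R.filter fun v => G.Adj w v).card : ℝ) ≤ (G.degree w : ℝ) - 1 := by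
    intro w hwM
    have hadjuw : G.Adj w u := by
      have h5 : w ∈ G.neighborFinset u := by rwa [← hM]
      rw [SimpleGraph.mem_neighborFinset] at h5
      exact G.adj_symm h5
    have hsub : insert u ((M.filter fun v => G.Adj w v) ∪ (R.filter fun v => G.Adj w v))
        ⊆ G.neighborFinset w := by
      intro v hv
      rw [Finset.mem_insert] at hv
      rw [SimpleGraph.mem_neighborFinset]
      rcases hv with hveq | hv
      · rw [hveq]; exact hadjuw
      · rcases Finset.mem_union.mp hv with h | h <;> exact (Finset.mem_filter.mp h).2
    have hunotmem : u ∉ (M.filter fun v => G.Adj w v) ∪ (R.filter fun v => G.Adj w v) := by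
      rw [Finset.mem_union]
      rintro (h | h)
      exacts [huM (Finset.mem_filter.mp h).1, huR (Finset.mem_filter.mp h).1]
    have h := Finset.card_le_card hsub
    rw [Finset.card_insert_of_notMem hunotmem, Finset.card_union_of_disjoint (hfdisj w)] at h
    have h' : ((M.filter fun v => G.Adj w v).card : ℝ)
        + ((R.filter fun v => G.Adj w v).card : ℝ) + 1 ≤ (G.degree w : ℝ) := by
      exact_mod_cast h
    linarith
  -- main expansion
  have t0 : μ * (μ * x u) = ∑ w, ((M.filter fun v => G.Adj w v).card : ℝ) * x w := by
    rw [← heig' u, Finset.mul_sum]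
    have h1 : ∀ v ∈ M, μ * x v = ∑ w ∈ univ.filter (fun t => G.Adj v t), x w := by
      intro v _
      rw [← heig' v, SimpleGraph.neighborFinset_eq_filter]
    rw [Finset.sum_congr rfl h1, swap_sum]
  have t2 : (M.filter fun v => G.Adj u v) = M := by
    refine Finset.filter_true_of_mem fun v hv => ?_
    rw [hM, SimpleGraph.mem_neighborFinset] at hv
    exact hv
  have t1 : ∑ w, ((M.filter fun v => G.Adj w v).card : ℝ) * x w
      = (G.degree u : ℝ) * x u
        + ∑ w ∈ M, ((M.filter fun v => G.Adj w v).card : ℝ) * x w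
        + ∑ w ∈ R, ((M.filter fun v => G.Adj w v).card : ℝ) * x w := by
    rw [← Finset.sum_sdiff hMsub, Finset.sum_insert huM, t2, ← hR]
    have hcard : ((M.card : ℕ) : ℝ) = (G.degree u : ℝ) := by rw [hM]; rfl
    rw [hcard]
    ring
  have t3 : ∑ w ∈ R, ((M.filter fun v => G.Adj w v).card:ℝ) * x w
      = ∑ w ∈ R, ((G.degree w : ℝ) - μ) * x w
        + ∑ w ∈ M, ((R.filter fun v => G.Adj w v).card : ℝ) * x w := by
    have e1 : ∀ w ∈ R, ((M.filter fun v => G.Adj w v).card:ℝ) * x w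
        = (G.degree w:ℝ) * x w - ((R.filter fun v => G.Adj w v).card:ℝ) * x w := by
      intro w hw
      have h := f_R w hw
      linear_combination (x w) * h
    rw [Finset.sum_congr rfl e1, Finset.sum_sub_distrib]
    have e2 : ∑ w ∈ R, ((R.filter fun v => G.Adj w v).card:ℝ) * x w
        = μ * ∑ w ∈ R, x w - ∑ w ∈ M, ((R.filter fun v => G.Adj w v).card:ℝ) * x w := by
      rw [← swap_sum G R R x]
      have e3 : ∀ w ∈ R, ∑ v ∈ R.filter (fun t => G.Adj w t), x v
          = μ * x w - ∑ v ∈ M.filter (fun t => G.Adj w t), x v := by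
        intro w hw
        have hu2 := heig' w
        rw [← hsplitN w hw, Finset.sum_union (hfdisj w)] at hu2
        have : (M.filter fun v => G.Adj w v) = M.filter (fun t => G.Adj w t) := rfl
        linarith [hu2]
      rw [Finset.sum_congr rfl e3, Finset.sum_sub_distrib, ← Finset.mul_sum, swap_sum G R M x]
    rw [e2]
    have e4 : ∑ w ∈ R, ((G.degree w : ℝ) - μ) * x w
        = ∑ w ∈ R, (G.degree w : ℝ) * x w - μ * ∑ w ∈ R, x w := by
      rw [Finset.mul_sum, ← Finset.sum_sub_distrib]
      exact Finset.sum_congr rfl fun w _ => by ring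
    rw [e4]
    ring
  -- bounds
  have t4 : ∑ w ∈ M, (((M.filter fun v => G.Adj w v).card:ℝ)
        + ((R.filter fun v => G.Adj w v).card:ℝ)) * x w
      ≤ (δ - 1) * (μ * x u) + (∑ w ∈ M, ((G.degree w:ℝ) - δ)) * x u := by
    have s1 : ∑ w ∈ M, (((M.filter fun v => G.Adj w v).card:ℝ)
          + ((R.filter fun v => G.Adj w v).card:ℝ)) * x w
        ≤ ∑ w ∈ M, ((G.degree w:ℝ) - 1) * x w :=
      Finset.sum_le_sum fun w hw => mul_le_mul_of_nonneg_right (f_M w hw) (hx0 w)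
    have s2 : ∑ w ∈ M, ((G.degree w:ℝ) - 1) * x w
        = (δ - 1) * ∑ w ∈ M, x w + ∑ w ∈ M, ((G.degree w:ℝ) - δ) * x w := by
      rw [Finset.mul_sum, ← Finset.sum_add_distrib]
      exact Finset.sum_congr rfl fun w _ => by ring
    have s3 : ∑ w ∈ M, ((G.degree w:ℝ) - δ) * x w
        ≤ (∑ w ∈ M, ((G.degree w:ℝ) - δ)) * x u := by
      rw [Finset.sum_mul]
      refine Finset.sum_le_sum fun w _ => ?_
      have h1 : (0:ℝ) ≤ (G.degree w:ℝ) - δ := by linarith [hδd w]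
      exact mul_le_mul_of_nonneg_left (humax w) h1
    calc ∑ w ∈ M, (((M.filter fun v => G.Adj w v).card:ℝ)
          + ((R.filter fun v => G.Adj w v).card:ℝ)) * x w
        ≤ ∑ w ∈ M, ((G.degree w:ℝ) - 1) * x w := s1
      _ = (δ - 1) * ∑ w ∈ M, x w + ∑ w ∈ M, ((G.degree w:ℝ) - δ) * x w := s2
      _ = (δ - 1) * (μ * x u) + ∑ w ∈ M, ((G.degree w:ℝ) - δ) * x w := by rw [heig' u]
      _ ≤ (δ - 1) * (μ * x u) + (∑ w ∈ M, ((G.degree w:ℝ) - δ)) * x u := by linarith [s3]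
  have t5 : ∑ w ∈ R, ((G.degree w:ℝ) - μ) * x w ≤ (∑ w ∈ R, ((G.degree w:ℝ) - δ)) * x u := by
    rw [Finset.sum_mul]
    refine Finset.sum_le_sum fun w _ => ?_
    rcases le_total ((G.degree w:ℝ)) μ with h | h
    · nlinarith [hx0 w, hx0 u, hδd w]
    · nlinarith [humax w, hx0 w, hμδ, hx0 u]
  -- degree sums
  have hsum : ∑ w ∈ M, ((G.degree w:ℝ) - δ) + ∑ w ∈ R, ((G.degree w:ℝ) - δ)
      = 2*(G.edgeFinset.card:ℝ) - δ*n - ((G.degree u:ℝ) - δ) := by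
    have h2 : ∑ w, (G.degree w:ℝ) = 2*(G.edgeFinset.card:ℝ) := by
      have := G.sum_degrees_eq_twice_card_edges
      exact_mod_cast congrArg (Nat.cast : ℕ → ℝ) this
    have h1 : ∑ w, ((G.degree w:ℝ) - δ) = 2*(G.edgeFinset.card:ℝ) - δ*n := by
      rw [Finset.sum_sub_distrib, h2, Finset.sum_const, Finset.card_univ, Fintype.card_fin,
        nsmul_eq_mul]
      ring
    have h3 : ∑ w, ((G.degree w:ℝ) - δ) = ((G.degree u:ℝ) - δ)
        + ∑ w ∈ M, ((G.degree w:ℝ) - δ) + ∑ w ∈ R, ((G.degree w:ℝ) - δ) := by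
      rw [← Finset.sum_sdiff hMsub, Finset.sum_insert huM, ← hR]
      ring
    linarith
  -- assemble
  have final : μ * (μ * x u)
      ≤ ((δ - 1) * μ + (2*(G.edgeFinset.card:ℝ) - δ*n + δ)) * x u := by
    have hMsumsplit : ∑ w ∈ M, ((M.filter fun v => G.Adj w v).card : ℝ) * x w
          + ∑ w ∈ M, ((R.filter fun v => G.Adj w v).card : ℝ) * x w
        = ∑ w ∈ M, (((M.filter fun v => G.Adj w v).card:ℝ)
          + ((R.filter fun v => G.Adj w v).card:ℝ)) * x w := by
      rw [← Finset.sum_add_distrib]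
      exact Finset.sum_congr rfl fun w _ => by ring
    nlinarith [t0, t1, t3, t4, t5, hsum, hMsumsplit]
  have key2 : μ * μ ≤ (δ-1)*μ + (2*(G.edgeFinset.card:ℝ) - δ*n + δ) := by
    have h2 : (μ*μ) * x u ≤ ((δ-1)*μ + (2*(G.edgeFinset.card:ℝ) - δ*n + δ)) * x u := by
      nlinarith [final]
    exact le_of_mul_le_mul_right h2 hxu
  nlinarith [key2]


/-- Hong–Nikiforov bound: ρ(G) ≤ (δ-1)/2 + √(2e(G) - δn + (δ+1)²/4). -/
theorem spectral_radius_le_of_minDegree {n : ℕ} (G : SimpleGraph (Fin n))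
    [DecidableRel G.Adj] :
    specRad G ≤ ((G.minDegree : ℝ) - 1) / 2 +
      Real.sqrt (2 * (G.edgeFinset.card : ℝ) - (G.minDegree : ℝ) * n +
        ((G.minDegree : ℝ) + 1) ^ 2 / 4) := by
  rcases Nat.eq_zero_or_pos n with hn | hn
  · subst hn
    have h0 : specRad G = 0 := by rw [specRad_eq_iSup]; exact Real.iSup_of_isEmpty _
    have hm : G.edgeFinset = ∅ := by
      ext e
      refine e.ind ?_
      intro a b
      exact a.elim0
    have hd : G.minDegree = 0 := by
      unfold SimpleGraph.minDegree
      simp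
    rw [h0, hm, hd]
    have hval : (2*((∅ : Finset (Sym2 (Fin 0))).card:ℝ) - ((0:ℕ):ℝ)*((0:ℕ):ℝ) + (((0:ℕ):ℝ)+1)^2/4)
        = (1/2)^2 := by norm_num
    rw [hval, Real.sqrt_sq (by norm_num)]
    norm_num
  · have hne : Nonempty (Fin n) := ⟨⟨0, hn⟩⟩
    have hA := adjMatrix_isHermitian G
    have hnn : ∀ i j, 0 ≤ (G.adjMatrix ℝ) i j := by
      intro i j
      rw [SimpleGraph.adjMatrix_apply]
      by_cases h : G.Adj i j <;> simp [h]
    obtain ⟨x, hx0, hxx, heig, hray⟩ := perron_aux hn hA hnn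
    rw [← specRad_eq_iSup] at heig hray
    have heig' : ∀ v, ∑ w ∈ G.neighborFinset v, x w = specRad G * x v := by
      intro v
      have h := congrFun heig v
      rw [SimpleGraph.adjMatrix_mulVec_apply] at h
      simpa using h
    have hδd : ∀ v, ((G.minDegree : ℝ)) ≤ (G.degree v : ℝ) :=
      fun v => Nat.cast_le.mpr (G.minDegree_le_degree v)
    have hμδ : (G.minDegree : ℝ) ≤ specRad G := by
      have h := hray (fun _ => 1)
      have h1 : (fun _ : Fin n => (1:ℝ)) ⬝ᵥ ((G.adjMatrix ℝ) *ᵥ (fun _ => 1)) = ∑ v, (G.degree v : ℝ) := by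
        unfold dotProduct
        refine Finset.sum_congr rfl fun v _ => ?_
        rw [one_mul, SimpleGraph.adjMatrix_mulVec_apply, Finset.sum_const, nsmul_eq_mul, mul_one,
          SimpleGraph.card_neighborFinset_eq_degree]
      have h2 : (fun _ : Fin n => (1:ℝ)) ⬝ᵥ (fun _ : Fin n => (1:ℝ)) = (n:ℝ) := by
        unfold dotProduct
        simp
      rw [h1, h2] at h
      have h3 : (n:ℝ) * (G.minDegree:ℝ) ≤ ∑ v, (G.degree v:ℝ) := by
        calc (n:ℝ) * (G.minDegree:ℝ) = ∑ _v : Fin n, (G.minDegree:ℝ) := by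
              rw [Finset.sum_const, Finset.card_univ, Fintype.card_fin, nsmul_eq_mul]
          _ ≤ ∑ v, (G.degree v:ℝ) := Finset.sum_le_sum fun v _ => hδd v
      have hn' : (0:ℝ) < n := by exact_mod_cast hn
      nlinarith [h, h3]
    obtain ⟨u, -, humax'⟩ := Finset.exists_max_image univ x univ_nonempty
    have humax : ∀ v, x v ≤ x u := fun v => humax' v (mem_univ v)
    have hxu : 0 < x u := by
      rcases lt_or_ge 0 (x u) with h | h
      · exact h
      · exfalso
        have hz : ∀ v, x v = 0 := fun v => le_antisymm (le_trans (humax v) h) (hx0 v)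
        have hzz : x ⬝ᵥ x = 0 := by
          unfold dotProduct
          exact Finset.sum_eq_zero fun v _ => by rw [hz v, mul_zero]
        rw [hxx] at hzz
        norm_num at hzz
    have key := key_ineq G (specRad G) x hx0 heig' u humax hxu hμδ hδd
    have h6 : (specRad G - ((G.minDegree:ℝ)-1)/2)^2
        ≤ 2*(G.edgeFinset.card:ℝ) - (G.minDegree:ℝ)*n + ((G.minDegree:ℝ)+1)^2/4 := by
      nlinarith [key]
    have h7 : specRad G - ((G.minDegree:ℝ)-1)/2
        ≤ Real.sqrt (2*(G.edgeFinset.card:ℝ) - (G.minDegree:ℝ)*n + ((G.minDegree:ℝ)+1)^2/4) := by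
      calc specRad G - ((G.minDegree:ℝ)-1)/2 ≤ |specRad G - ((G.minDegree:ℝ)-1)/2| :=
            le_abs_self _
        _ = Real.sqrt ((specRad G - ((G.minDegree:ℝ)-1)/2)^2) := (Real.sqrt_sq_eq_abs _).symm
        _ ≤ _ := Real.sqrt_le_sqrt h6
    linarith
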